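/- The canonical 3D drawing C(T) of an n-vertex rooted tree T lies in the box [0, rpw(T)−1] × {0} × [0, n−1]: every vertex has y-coordinate 0, x-coordinate between 0 and rpw(T)−1, and z-coordinate between 0 and n−1, with the root at the origin. -/

import Mathlib

/-- Rooted trees. -/
inductive RTree where
  | node : List RTree → RTree

/-- Number of vertices. -/
def RTree.size : RTree → ℕ
  | .node ts => 1 + (ts.attach.map (fun x => RTree.size x.1)).sum
decreasing_by
  have := List.sizeOf_lt_of_mem x.2
  simp [RTree.node.sizeOf_spec]
  omega

/-- Rooted pathwidth. -/
def RTree.rpw : RTree → ℕ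
  | .node ts =>
    let ks := ts.attach.map (fun x => RTree.rpw x.1)
    let k := ks.foldr max 0
    if ks.count k = 1 then k else k + 1
decreasing_by
  have := List.sizeOf_lt_of_mem x.2
  simp [RTree.node.sizeOf_spec]
  omega

/-- The canonical 3D drawing `C(T)`, as the list of the integer positions
`(x, y, z)` of the vertices (root first, at the origin): the heavy child `c`
(a child of maximum rooted pathwidth) continues the heavy path, translated by
`(0, 0, |T| − |T(c)|)`; the light children are placed at `x`-offset `1` and
stacked vertically starting at `z`-offset `1`, consecutive light subtrees being
shifted by the sizes of the previous ones; light subtrees are drawn recursively. -/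
def RTree.posList : RTree → List (ℤ × ℤ × ℤ)
  | .node ts =>
    match h : ts.dropWhile (fun t => t.rpw ≠ (ts.map RTree.rpw).foldr max 0) with
    | [] => [(0, 0, 0)]
    | c :: rest =>
      let lights := ts.takeWhile (fun t => t.rpw ≠ (ts.map RTree.rpw).foldr max 0)
        ++ rest
      let zs : List ℕ := (lights.map RTree.size).scanl (· + ·) 1
      (0, 0, 0) ::
        ((RTree.posList c).map (fun p =>
          (p.1, p.2.1, p.2.2 + ((RTree.size (.node ts) : ℤ) - (RTree.size c : ℤ)))) ++
        (lights.attach.zip zs).flatMap (fun x =>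
          (RTree.posList x.1.1).map (fun p =>
            (p.1 + 1, p.2.1, p.2.2 + (x.2 : ℤ)))))
decreasing_by
  · have hc : c ∈ ts :=
      (List.dropWhile_sublist _).mem (h ▸ List.mem_cons_self (a := c) (l := rest))
    have := List.sizeOf_lt_of_mem hc
    simp [RTree.node.sizeOf_spec]
    omega
  · have hmem : x.1.1 ∈ ts := by
      have h1 := x.1.2
      rcases List.mem_append.mp h1 with ha | hb
      · exact (List.takeWhile_sublist _).mem ha
      · exact (List.dropWhile_sublist _).mem (h ▸ List.mem_cons_of_mem c hb)
    have := List.sizeOf_lt_of_mem hmem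
    simp [RTree.node.sizeOf_spec]
    omega


private lemma attach_map_eq (f : RTree → ℕ) (ts : List RTree) :
    ts.attach.map (fun x => f x.1) = ts.map f := by simp

private lemma size_node (ts : List RTree) :
    (RTree.node ts).size = 1 + (ts.map RTree.size).sum := by
  rw [RTree.size, attach_map_eq]

private lemma size_pos (T : RTree) : 1 ≤ T.size := by
  cases T with
  | node ts => rw [size_node]; omega

private lemma rpw_node (ts : List RTree) :
    (RTree.node ts).rpw =
      if (ts.map RTree.rpw).count ((ts.map RTree.rpw).foldr max 0) = 1 then
        (ts.map RTree.rpw).foldr max 0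
      else (ts.map RTree.rpw).foldr max 0 + 1 := by
  rw [RTree.rpw]
  simp only [attach_map_eq]

private lemma le_foldr_max {a : ℕ} {l : List ℕ} (h : a ∈ l) : a ≤ l.foldr max 0 := by
  induction l with
  | nil => cases h
  | cons b l ih =>
    rcases List.mem_cons.mp h with rfl | h
    · exact le_max_left _ _
    · exact le_trans (ih h) (le_max_right _ _)

private theorem rpw_pos : ∀ (T : RTree), 1 ≤ T.rpw
  | .node ts => by
    rw [rpw_node]
    split
    · rename_i hc
      have hmem : (ts.map RTree.rpw).foldr max 0 ∈ ts.map RTree.rpw :=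
        List.count_pos_iff.mp (by omega)
      obtain ⟨t, ht, hrt⟩ := List.mem_map.mp hmem
      have := rpw_pos t
      omega
    · omega
termination_by T => sizeOf T
decreasing_by
  have := List.sizeOf_lt_of_mem ht
  simp [RTree.node.sizeOf_spec]
  omega

private lemma mem_zip_scanl :
    ∀ (L : List ℕ) (a : ℕ) (x : ℕ × ℕ), x ∈ L.zip (L.scanl (· + ·) a) →
      a ≤ x.2 ∧ x.2 + x.1 ≤ a + L.sum := by
  intro L
  induction L with
  | nil => intro a x hx; cases hx
  | cons b L ih =>
    intro a x hx
    rw [List.scanl_cons, List.zip_cons_cons] at hx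
    rcases List.mem_cons.mp hx with rfl | hx
    · simp only [List.sum_cons]; omega
    · have := ih (a + b) x hx
      simp only [List.sum_cons]
      omega

theorem posList_nil {ts : List RTree}
    (h : ts.dropWhile (fun t => t.rpw ≠ (ts.map RTree.rpw).foldr max 0) = []) :
    (RTree.node ts).posList = [(0, 0, 0)] := by
  rw [RTree.posList]
  split
  · rfl
  · rename_i c rest h2
    rw [h] at h2; cases h2

theorem posList_cons {ts : List RTree} {c : RTree} {rest : List RTree}
    (h : ts.dropWhile (fun t => t.rpw ≠ (ts.map RTree.rpw).foldr max 0) = c :: rest) :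
    (RTree.node ts).posList =
      (0, 0, 0) ::
        ((RTree.posList c).map (fun p =>
          (p.1, p.2.1, p.2.2 + ((RTree.size (.node ts) : ℤ) - (RTree.size c : ℤ)))) ++
        ((ts.takeWhile (fun t => t.rpw ≠ (ts.map RTree.rpw).foldr max 0) ++ rest).attach.zip
            (((ts.takeWhile (fun t => t.rpw ≠ (ts.map RTree.rpw).foldr max 0) ++ rest).map RTree.size).scanl (· + ·) 1)).flatMap
          (fun x =>
          (RTree.posList x.1.1).map (fun p =>
            (p.1 + 1, p.2.1, p.2.2 + ((x.2 : ℕ) : ℤ))))) := by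
  rw [RTree.posList]
  split
  · rename_i h2; rw [h] at h2; cases h2
  · rename_i c2 rest2 h2; rw [h] at h2; cases h2; rfl

/-- the canonical 3D drawing of an `n`-vertex rooted tree `T` has
its root at the origin and lies in the box `[0, rpw T − 1] × {0} × [0, n − 1]`. -/
theorem stmt_13 (T : RTree) :
    T.posList.head? = some (0, 0, 0) ∧
    ∀ p ∈ T.posList, p.2.1 = 0 ∧
      0 ≤ p.1 ∧ p.1 ≤ (T.rpw : ℤ) - 1 ∧
      0 ≤ p.2.2 ∧ p.2.2 ≤ (T.size : ℤ) - 1 := by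
  induction T using RTree.posList.induct with
  | case1 ts h =>
    rw [posList_nil h]
    have h1 : 1 ≤ (RTree.node ts).rpw := rpw_pos _
    have h2 : 1 ≤ (RTree.node ts).size := size_pos _
    refine ⟨rfl, ?_⟩
    intro p hp
    rw [List.mem_singleton] at hp
    subst hp
    refine ⟨rfl, le_refl _, ?_, le_refl _, ?_⟩ <;> · simp; omega
  | case2 ts c rest h lights ih1 ih2 =>
    have hlights : lights = ts.takeWhile (fun t => t.rpw ≠ (ts.map RTree.rpw).foldr max 0) ++ rest := rfl
    have hrpw1 : 1 ≤ (RTree.node ts).rpw := rpw_pos _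
    have hcts : c ∈ ts := (List.dropWhile_sublist _).mem (h ▸ List.mem_cons_self (a := c) (l := rest))
    have hts : (ts.takeWhile (fun t => t.rpw ≠ (ts.map RTree.rpw).foldr max 0))
        ++ (c :: rest) = ts := by
      rw [← h]; exact List.takeWhile_append_dropWhile
    -- sizes
    have hsum : (ts.map RTree.size).sum = (lights.map RTree.size).sum + c.size := by
      conv_lhs => rw [← hts]
      rw [hlights] at *
      simp only [List.map_append, List.sum_append, List.map_cons, List.sum_cons]
      omega
    have hcsize : 1 ≤ c.size := size_pos c
    have hsize : (RTree.node ts).size = 1 + (lights.map RTree.size).sum + c.size := by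
      rw [size_node, hsum]; omega
    -- rpw facts
    have hcK : c.rpw ≤ (ts.map RTree.rpw).foldr max 0 :=
      le_foldr_max (List.mem_map_of_mem (f := RTree.rpw) hcts)
    have hKrpw : (ts.map RTree.rpw).foldr max 0 ≤ (RTree.node ts).rpw := by
      rw [rpw_node]; split <;> omega
    have hcpred : c.rpw = (ts.map RTree.rpw).foldr max 0 := by
      have hne : ts.dropWhile (fun t => t.rpw ≠ (ts.map RTree.rpw).foldr max 0) ≠ [] := by
        rw [h]; exact List.cons_ne_nil _ _
      have := List.head_dropWhile_not
        (fun t => decide (t.rpw ≠ (ts.map RTree.rpw).foldr max 0)) (l := ts) hne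
      have hhead : (ts.dropWhile
          (fun t => decide (t.rpw ≠ (ts.map RTree.rpw).foldr max 0))).head hne = c := by
        rw [List.head_eq_iff_head?_eq_some, h]; rfl
      rw [hhead] at this
      simpa using this
    have hlight : ∀ t ∈ lights, t.rpw + 1 ≤ (RTree.node ts).rpw := by
      intro t ht
      have htts : t ∈ ts := by
        rcases List.mem_append.mp ht with ha | hb
        · exact (List.takeWhile_sublist _).mem ha
        · exact (List.dropWhile_sublist _).mem (h ▸ List.mem_cons_of_mem c hb)
      have htK : t.rpw ≤ (ts.map RTree.rpw).foldr max 0 :=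
        le_foldr_max (List.mem_map_of_mem (f := RTree.rpw) htts)
      rw [rpw_node]
      split
      · rename_i hc1
        -- count = 1, so t.rpw ≠ K
        have htne : t.rpw ≠ (ts.map RTree.rpw).foldr max 0 := by
          rcases List.mem_append.mp ht with ha | hb
          · have := List.mem_takeWhile_imp ha
            simpa using this
          · -- t ∈ rest; count argument
            intro heq
            have hsplit : ts.map RTree.rpw =
                ((ts.takeWhile (fun t => t.rpw ≠ (ts.map RTree.rpw).foldr max 0)).map
                  RTree.rpw) ++ c.rpw :: rest.map RTree.rpw := by
              conv_lhs => rw [← hts]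
              rw [List.map_append, List.map_cons]
            nth_rewrite 2 [hsplit] at hc1
            rw [List.count_append, List.count_cons] at hc1
            have h2 : 0 < ((rest.map RTree.rpw).count ((ts.map RTree.rpw).foldr max 0)) :=
              List.count_pos_iff.mpr (heq ▸ List.mem_map_of_mem (f := RTree.rpw) hb)
            rw [hcpred] at hc1
            simp only [beq_self_eq_true, if_pos] at hc1
            omega
        omega
      · omega
    rw [posList_cons h]
    refine ⟨rfl, ?_⟩
    intro p hp
    rcases List.mem_cons.mp hp with rfl | hp
    · have h2 : 1 ≤ (RTree.node ts).size := size_pos _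
      refine ⟨rfl, le_refl _, ?_, le_refl _, ?_⟩ <;> · simp; omega
    rcases List.mem_append.mp hp with hA | hB
    · -- heavy child part
      obtain ⟨q, hq, rfl⟩ := List.mem_map.mp hA
      obtain ⟨hz, hx1, hx2, hz1, hz2⟩ := ih1.2 q hq
      have hcrpw : c.rpw ≤ (RTree.node ts).rpw := le_trans hcK hKrpw
      have hsz' : ((RTree.node ts).size : ℤ) =
          1 + ((lights.map RTree.size).sum : ℤ) + (c.size : ℤ) := by exact_mod_cast hsize
      have hcs' : (1 : ℤ) ≤ (c.size : ℤ) := by exact_mod_cast hcsize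
      refine ⟨hz, by omega, ?_, ?_, ?_⟩
      · simp only
        have : (c.rpw : ℤ) ≤ ((RTree.node ts).rpw : ℤ) := by exact_mod_cast hcrpw
        omega
      · simp only
        omega
      · simp only
        omega
    · -- light part
      obtain ⟨x, hx, hpx⟩ := List.mem_flatMap.mp hB
      obtain ⟨q, hq, rfl⟩ := List.mem_map.mp hpx
      obtain ⟨hz, hx1, hx2, hz1, hz2⟩ := (ih2 x).2 q hq
      have hmem : x.1.1 ∈ lights := x.1.2
      have hrl := hlight x.1.1 hmem
      -- scanl bounds
      have h1 := List.mem_map_of_mem (f := Prod.map (Subtype.val) id) hx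
      rw [← List.zip_map_left, List.attach_map_subtype_val] at h1
      have h2 := List.mem_map_of_mem (f := Prod.map RTree.size id) h1
      rw [← List.zip_map_left] at h2
      have h3 := mem_zip_scanl (lights.map RTree.size) 1 _ h2
      simp only [Prod.map, id] at h3
      obtain ⟨hzl, hzu⟩ := h3
      have hsz' : ((RTree.node ts).size : ℤ) =
          1 + ((lights.map RTree.size).sum : ℤ) + (c.size : ℤ) := by exact_mod_cast hsize
      have hcs' : (1 : ℤ) ≤ (c.size : ℤ) := by exact_mod_cast hcsize
      have hzu' : (x.2 : ℤ) + (x.1.1.size : ℤ) ≤ 1 + ((lights.map RTree.size).sum : ℤ) := by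
        exact_mod_cast hzu
      have hzl' : (1 : ℤ) ≤ (x.2 : ℤ) := by exact_mod_cast hzl
      refine ⟨hz, by omega, ?_, by simp only; omega, ?_⟩
      · simp only
        have : (x.1.1.rpw : ℤ) + 1 ≤ ((RTree.node ts).rpw : ℤ) := by exact_mod_cast hrl
        omega
      · simp only
        omega
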